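/- Let u : (1, ∞) → (1, ∞) be differentiable and satisfy u'(x) ≥ u(x)·log u(x) / (x·log x) for all x > 1. Then v(x) = u(x)^{1−γ} · x^{γ}, for γ ∈ [0,1], satisfies v'(x) ≥ v(x)·log v(x) / (x·log x) for all x > 1. -/

import Mathlib

theorem stmt_8 (u u' : ℝ → ℝ) (γ : ℝ) (hγ : γ ∈ Set.Icc (0 : ℝ) 1)
    (hu : ∀ x, 1 < x → HasDerivAt u (u' x) x)
    (hur : ∀ x, 1 < x → 1 < u x)
    (hineq : ∀ x, 1 < x → u x * Real.log (u x) / (x * Real.log x) ≤ u' x)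
    (v : ℝ → ℝ) (hv : ∀ x, v x = u x ^ (1 - γ) * x ^ γ) :
    ∀ x, 1 < x → v x * Real.log (v x) / (x * Real.log x) ≤ deriv v x := by
  intro x hx
  obtain ⟨hγ0, hγ1⟩ := hγ
  have ha : (1:ℝ) < u x := hur x hx
  have ha0 : (0:ℝ) < u x := lt_trans one_pos ha
  have hb0 : (0:ℝ) < x := lt_trans one_pos hx
  have hla : 0 < Real.log (u x) := Real.log_pos ha
  have hlb : 0 < Real.log x := Real.log_pos hx
  have hveq : v = fun y => u y ^ (1 - γ) * y ^ γ := funext hv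
  -- derivative of v
  have hd1 : HasDerivAt (fun y => u y ^ (1 - γ))
      ((1 - γ) * u x ^ (1 - γ - 1) * u' x) x := by
    have h := (hu x hx).rpow_const (p := 1 - γ) (Or.inl (ne_of_gt ha0))
    convert h using 1; ring
  have hd2 : HasDerivAt (fun y : ℝ => y ^ γ) (γ * x ^ (γ - 1)) x :=
    Real.hasDerivAt_rpow_const (Or.inl (ne_of_gt hb0))
  have hdv : HasDerivAt v
      ((1 - γ) * u x ^ (1 - γ - 1) * u' x * x ^ γ +
        u x ^ (1 - γ) * (γ * x ^ (γ - 1))) x := by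
    rw [hveq]; exact hd1.mul hd2
  rw [hdv.deriv]
  -- rewrite v x and log (v x)
  have hvp : 0 < u x ^ (1 - γ) := Real.rpow_pos_of_pos ha0 _
  have hxp : 0 < x ^ γ := Real.rpow_pos_of_pos hb0 _
  have hlog : Real.log (v x) = (1 - γ) * Real.log (u x) + γ * Real.log x := by
    rw [hv, Real.log_mul (ne_of_gt hvp) (ne_of_gt hxp), Real.log_rpow ha0,
      Real.log_rpow hb0]
  have e1 : u x ^ (1 - γ - 1) = u x ^ (1 - γ) / u x := by
    rw [Real.rpow_sub ha0, Real.rpow_one]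
  have e2 : x ^ (γ - 1) = x ^ γ / x := by
    rw [Real.rpow_sub hb0, Real.rpow_one]
  rw [hv x, Real.log_mul (ne_of_gt hvp) (ne_of_gt hxp), Real.log_rpow ha0,
    Real.log_rpow hb0, e1, e2]
  have key : ((1 - γ) * Real.log (u x) + γ * Real.log x) / (x * Real.log x)
      ≤ (1 - γ) * (u' x / u x) + γ / x := by
    have h1 : Real.log (u x) / (x * Real.log x) ≤ u' x / u x := by
      rw [div_le_div_iff₀ (by positivity) ha0]
      have := hineq x hx
      rw [div_le_iff₀ (by positivity)] at this
      linarith [this]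
    have h2 : γ * Real.log x / (x * Real.log x) = γ / x := by
      field_simp
    have h1' : (1 - γ) * (Real.log (u x) / (x * Real.log x))
        ≤ (1 - γ) * (u' x / u x) :=
      mul_le_mul_of_nonneg_left h1 (by linarith)
    calc ((1 - γ) * Real.log (u x) + γ * Real.log x) / (x * Real.log x)
        = (1 - γ) * (Real.log (u x) / (x * Real.log x))
          + γ * Real.log x / (x * Real.log x) := by ring
      _ ≤ (1 - γ) * (u' x / u x) + γ / x := by rw [h2]; linarith
  calc u x ^ (1 - γ) * x ^ γ * ((1 - γ) * Real.log (u x) + γ * Real.log x) /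
        (x * Real.log x)
      = (u x ^ (1 - γ) * x ^ γ) *
        (((1 - γ) * Real.log (u x) + γ * Real.log x) / (x * Real.log x)) := by
        ring
    _ ≤ (u x ^ (1 - γ) * x ^ γ) * ((1 - γ) * (u' x / u x) + γ / x) :=
        mul_le_mul_of_nonneg_left key (by positivity)
    _ = (1 - γ) * (u x ^ (1 - γ) / u x) * u' x * x ^ γ +
        u x ^ (1 - γ) * (γ * (x ^ γ / x)) := by
        field_simp
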